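/- For each 1 ≤ i ≤ r, m₀ ∈ ℤ and m ∈ ℤ^r, the linear endomorphism D of L̂'_{r+1,k}(g) determined by D(a ⊗ t₀^{n₀} t^n) = n_i a ⊗ t₀^{m₀+n₀} t^{m+n} and D(K_j ⊗ t₀^{n₀} t^n) = n_i K_j ⊗ t₀^{m₀+n₀} t^{m+n} + δ_{i,j} Σ_{l=0}^r m_l K_l ⊗ t₀^{m₀+n₀} t^{m+n} (for 0 ≤ j ≤ r) is well defined on the quotient K, and D is a derivation of the Lie algebra L̂'_{r+1,k}(g): D[x,y] = [Dx, y] + [x, Dy] for all x, y ∈ L̂'_{r+1,k}(g). -/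

import Mathlib

/-- Exponents of monomials `t₀^{m₀} t^m = t₀^{m₀} t₁^{m₁} ⋯ t_r^{m_r}`. -/
abbrev TorIdx (r : ℕ) := ℤ × (Fin r → ℤ)

/-- The free module `⊕_{i=0}^r ℂK_i ⊗ O`, with basis `K_i ⊗ t₀^{m₀} t^m`
indexed by `(i, (m₀, m))`. -/
abbrev CF (r : ℕ) := (Fin (r + 1) × TorIdx r) →₀ ℂ

/-- The element `Σ_{l=0}^r c_l K_l ⊗ t₀^{e₀} t^e` where `(c_0, c_1, …, c_r) =
(m₀, m₁, …, m_r)`. -/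
noncomputable def consSum (r : ℕ) (m₀ : ℤ) (m : Fin r → ℤ) (e₀ : ℤ) (e : Fin r → ℤ) : CF r :=
  ∑ l : Fin (r + 1), Finsupp.single (l, (e₀, e)) (((Fin.cons m₀ m : Fin (r + 1) → ℤ) l : ℤ) : ℂ)

/-- The element `Σ_{i=0}^r m_i K_i ⊗ t₀^{m₀} t^m` spanning the relations. -/
noncomputable def relElem (r : ℕ) (m₀ : ℤ) (m : Fin r → ℤ) : CF r :=
  consSum r m₀ m m₀ m

/-- The subspace of relations, so that `K = CF r ⧸ RR r`. -/
noncomputable def RR (r : ℕ) : Submodule ℂ (CF r) :=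
  Submodule.span ℂ {x : CF r | ∃ (m₀ : ℤ) (m : Fin r → ℤ), x = relElem r m₀ m}

/-- The `g ⊗ O`-component of the bracket:
`[a ⊗ t₀^{m₀}t^m, b ⊗ t₀^{n₀}t^n] ↦ [a,b] ⊗ t₀^{m₀+n₀}t^{m+n}`, where `g ⊗ O`
is modelled as finitely supported functions `TorIdx r →₀ g`. -/
noncomputable def ggPart (r : ℕ) (g : Type*) [LieRing g] [LieAlgebra ℂ g]
    (f f' : TorIdx r →₀ g) : TorIdx r →₀ g :=
  f.sum fun p a => f'.sum fun q b => Finsupp.single (p.1 + q.1, p.2 + q.2) ⁅a, b⁆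

/-- The central component of the bracket (before passing to the quotient `K`):
`k(a|b) Σ_{i=0}^r m_i K_i ⊗ t₀^{m₀+n₀} t^{m+n}`. -/
noncomputable def centPart (r : ℕ) (g : Type*) [LieRing g] [LieAlgebra ℂ g]
    (k : ℂ) (B : g →ₗ[ℂ] g →ₗ[ℂ] ℂ) (f f' : TorIdx r →₀ g) : CF r :=
  f.sum fun p a => f'.sum fun q b =>
    (k * B a b) • consSum r p.1 p.2 (p.1 + q.1) (p.2 + q.2)

/-- The bracket of the toroidal Lie algebra `L̂'_{r+1,k}(g) = (g ⊗ O) ⊕ K` of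
level `k`, where `K = CF r ⧸ RR r` is central. -/
noncomputable def torBracket (r : ℕ) (g : Type*) [LieRing g] [LieAlgebra ℂ g]
    (k : ℂ) (B : g →ₗ[ℂ] g →ₗ[ℂ] ℂ)
    (x y : (TorIdx r →₀ g) × (CF r ⧸ RR r)) :
    (TorIdx r →₀ g) × (CF r ⧸ RR r) :=
  (ggPart r g x.1 y.1, (RR r).mkQ (centPart r g k B x.1 y.1))

/-- The action of the derivation `d_i ⊗ t₀^{m₀} t^m` on `g ⊗ O`:
`a ⊗ t₀^{n₀} t^n ↦ n_i a ⊗ t₀^{m₀+n₀} t^{m+n}`. -/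
noncomputable def derG (r : ℕ) (g : Type*) [LieRing g] [LieAlgebra ℂ g]
    (m₀ : ℤ) (m : Fin r → ℤ) (i : Fin r) (f : TorIdx r →₀ g) : TorIdx r →₀ g :=
  f.sum fun q a => Finsupp.single (m₀ + q.1, m + q.2) (((q.2 i : ℤ) : ℂ) • a)

/-- The action of the derivation `d_i ⊗ t₀^{m₀} t^m` on the free module
`⊕_{j=0}^r ℂK_j ⊗ O`:
`K_j ⊗ t₀^{n₀} t^n ↦ n_i K_j ⊗ t₀^{m₀+n₀} t^{m+n}
  + δ_{i,j} Σ_{l=0}^r m_l K_l ⊗ t₀^{m₀+n₀} t^{m+n}`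
(here `j = 0, …, r`, and the index `i ∈ {1, …, r}` corresponds to `i.succ`). -/
noncomputable def derK (r : ℕ) (m₀ : ℤ) (m : Fin r → ℤ) (i : Fin r) (u : CF r) : CF r :=
  u.sum fun jq c => c •
    (Finsupp.single (jq.1, (m₀ + jq.2.1, m + jq.2.2)) ((jq.2.2 i : ℤ) : ℂ)
      + (if jq.1 = i.succ then consSum r m₀ m (m₀ + jq.2.1) (m + jq.2.2) else 0))

section Aux

variable {r : ℕ} {g : Type*} [LieRing g] [LieAlgebra ℂ g]

lemma consSum_add (a a' e₀ : ℤ) (b b' e : Fin r → ℤ) :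
    consSum r (a + a') (b + b') e₀ e = consSum r a b e₀ e + consSum r a' b' e₀ e := by
  unfold consSum
  rw [← Finset.sum_add_distrib]
  refine Finset.sum_congr rfl fun l _ => ?_
  rw [← Finsupp.single_add]
  congr 1
  induction l using Fin.cases with
  | zero => simp
  | succ j => simp

lemma derK_zero (m₀ : ℤ) (m : Fin r → ℤ) (i : Fin r) : derK r m₀ m i 0 = 0 :=
  Finsupp.sum_zero_index

lemma derK_single (m₀ : ℤ) (m : Fin r → ℤ) (i : Fin r) (jq : Fin (r+1) × TorIdx r) (c : ℂ) :
    derK r m₀ m i (Finsupp.single jq c)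
      = c • (Finsupp.single (jq.1, (m₀ + jq.2.1, m + jq.2.2)) ((jq.2.2 i : ℤ) : ℂ)
        + (if jq.1 = i.succ then consSum r m₀ m (m₀ + jq.2.1) (m + jq.2.2) else 0)) :=
  Finsupp.sum_single_index (by simp)

lemma derK_add (m₀ : ℤ) (m : Fin r → ℤ) (i : Fin r) (u v : CF r) :
    derK r m₀ m i (u + v) = derK r m₀ m i u + derK r m₀ m i v :=
  Finsupp.sum_add_index' (fun _ => by simp) (fun _ c c' => add_smul c c' _)

lemma derK_smul (m₀ : ℤ) (m : Fin r → ℤ) (i : Fin r) (c : ℂ) (u : CF r) :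
    derK r m₀ m i (c • u) = c • derK r m₀ m i u := by
  unfold derK
  rw [Finsupp.sum_smul_index' (fun _ => by simp), Finsupp.smul_sum]
  exact Finsupp.sum_congr fun jq _ => by rw [smul_assoc]

/-- `derK` as a linear map. -/
noncomputable def derKL (r : ℕ) (m₀ : ℤ) (m : Fin r → ℤ) (i : Fin r) : CF r →ₗ[ℂ] CF r where
  toFun := derK r m₀ m i
  map_add' := derK_add m₀ m i
  map_smul' := derK_smul m₀ m i

@[simp] lemma derKL_apply (m₀ : ℤ) (m : Fin r → ℤ) (i : Fin r) (u : CF r) :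
    derKL r m₀ m i u = derK r m₀ m i u := rfl

lemma derK_consSum (m₀ a e₀ : ℤ) (m b e : Fin r → ℤ) (i : Fin r) :
    derK r m₀ m i (consSum r a b e₀ e)
      = ((e i : ℤ) : ℂ) • consSum r a b (m₀ + e₀) (m + e)
        + ((b i : ℤ) : ℂ) • consSum r m₀ m (m₀ + e₀) (m + e) := by
  rw [show derK r m₀ m i (consSum r a b e₀ e) = derKL r m₀ m i (consSum r a b e₀ e) from rfl,
    consSum, map_sum]
  simp only [derKL_apply, derK_single, smul_add]
  rw [Finset.sum_add_distrib]
  congr 1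
  · rw [consSum, Finset.smul_sum]
    refine Finset.sum_congr rfl fun l _ => ?_
    rw [Finsupp.smul_single, Finsupp.smul_single, smul_eq_mul, smul_eq_mul, mul_comm]
  · simp only [smul_ite, smul_zero, Finset.sum_ite_eq', Finset.mem_univ, if_true,
      Fin.cons_succ]

lemma derK_relElem (m₀ m₀' : ℤ) (m m' : Fin r → ℤ) (i : Fin r) :
    derK r m₀ m i (relElem r m₀' m')
      = ((m' i : ℤ) : ℂ) • relElem r (m₀ + m₀') (m + m') := by
  rw [relElem, derK_consSum, relElem, ← smul_add, ← consSum_add]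
  rw [show m₀ + m₀' = m₀' + m₀ from add_comm _ _, show m + m' = m' + m from add_comm _ _]

lemma derK_mem_RR (m₀ : ℤ) (m : Fin r → ℤ) (i : Fin r) :
    ∀ u ∈ RR r, derK r m₀ m i u ∈ RR r := by
  intro u hu
  have : RR r ≤ (RR r).comap (derKL r m₀ m i) := by
    rw [RR, Submodule.span_le]
    rintro x ⟨a, b, rfl⟩
    simp only [SetLike.mem_coe, Submodule.mem_comap, derKL_apply, derK_relElem]
    exact Submodule.smul_mem _ _ (Submodule.subset_span ⟨_, _, rfl⟩)
  exact this hu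

/- derG lemmas -/
variable (g) in
lemma derG_zero (m₀ : ℤ) (m : Fin r → ℤ) (i : Fin r) : derG r g m₀ m i 0 = 0 :=
  Finsupp.sum_zero_index

variable (g) in
lemma derG_single (m₀ : ℤ) (m : Fin r → ℤ) (i : Fin r) (q : TorIdx r) (a : g) :
    derG r g m₀ m i (Finsupp.single q a)
      = Finsupp.single (m₀ + q.1, m + q.2) (((q.2 i : ℤ) : ℂ) • a) :=
  Finsupp.sum_single_index (by simp)

variable (g) in
lemma derG_add (m₀ : ℤ) (m : Fin r → ℤ) (i : Fin r) (f f' : TorIdx r →₀ g) :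
    derG r g m₀ m i (f + f') = derG r g m₀ m i f + derG r g m₀ m i f' :=
  Finsupp.sum_add_index' (fun _ => by simp) (fun _ a a' => by rw [smul_add, Finsupp.single_add])

/- ggPart lemmas -/
variable (g) in
lemma ggPart_zero_left (f' : TorIdx r →₀ g) : ggPart r g 0 f' = 0 :=
  Finsupp.sum_zero_index

variable (g) in
lemma ggPart_zero_right (f : TorIdx r →₀ g) : ggPart r g f 0 = 0 := by
  simp [ggPart]

variable (g) in
lemma ggPart_single_single (p q : TorIdx r) (a b : g) :
    ggPart r g (Finsupp.single p a) (Finsupp.single q b)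
      = Finsupp.single (p.1 + q.1, p.2 + q.2) ⁅a, b⁆ := by
  unfold ggPart
  rw [Finsupp.sum_single_index (by simp), Finsupp.sum_single_index (by simp)]

variable (g) in
lemma ggPart_add_left (f₁ f₂ f' : TorIdx r →₀ g) :
    ggPart r g (f₁ + f₂) f' = ggPart r g f₁ f' + ggPart r g f₂ f' := by
  unfold ggPart
  refine Finsupp.sum_add_index' (fun p => by simp) (fun p a₁ a₂ => ?_)
  rw [← Finsupp.sum_add]
  exact Finsupp.sum_congr fun q _ => by rw [add_lie, Finsupp.single_add]

variable (g) in
lemma ggPart_add_right (f f₁ f₂ : TorIdx r →₀ g) :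
    ggPart r g f (f₁ + f₂) = ggPart r g f f₁ + ggPart r g f f₂ := by
  unfold ggPart
  rw [← Finsupp.sum_add]
  exact Finsupp.sum_congr fun p _ =>
    Finsupp.sum_add_index' (fun q => by simp) (fun q b₁ b₂ => by rw [lie_add, Finsupp.single_add])

/- centPart lemmas -/
variable (g) in
lemma centPart_zero_left (k : ℂ) (B : g →ₗ[ℂ] g →ₗ[ℂ] ℂ) (f' : TorIdx r →₀ g) :
    centPart r g k B 0 f' = 0 :=
  Finsupp.sum_zero_index

variable (g) in
lemma centPart_zero_right (k : ℂ) (B : g →ₗ[ℂ] g →ₗ[ℂ] ℂ) (f : TorIdx r →₀ g) :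
    centPart r g k B f 0 = 0 := by
  simp [centPart]

variable (g) in
lemma centPart_single_single (k : ℂ) (B : g →ₗ[ℂ] g →ₗ[ℂ] ℂ) (p q : TorIdx r) (a b : g) :
    centPart r g k B (Finsupp.single p a) (Finsupp.single q b)
      = (k * B a b) • consSum r p.1 p.2 (p.1 + q.1) (p.2 + q.2) := by
  unfold centPart
  rw [Finsupp.sum_single_index (by simp), Finsupp.sum_single_index (by simp)]

variable (g) in
lemma centPart_add_left (k : ℂ) (B : g →ₗ[ℂ] g →ₗ[ℂ] ℂ) (f₁ f₂ f' : TorIdx r →₀ g) :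
    centPart r g k B (f₁ + f₂) f' = centPart r g k B f₁ f' + centPart r g k B f₂ f' := by
  unfold centPart
  refine Finsupp.sum_add_index' (fun p => by simp) (fun p a₁ a₂ => ?_)
  rw [← Finsupp.sum_add]
  exact Finsupp.sum_congr fun q _ => by rw [map_add, LinearMap.add_apply, mul_add, add_smul]

variable (g) in
lemma centPart_add_right (k : ℂ) (B : g →ₗ[ℂ] g →ₗ[ℂ] ℂ) (f f₁ f₂ : TorIdx r →₀ g) :
    centPart r g k B f (f₁ + f₂) = centPart r g k B f f₁ + centPart r g k B f f₂ := by
  unfold centPart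
  rw [← Finsupp.sum_add]
  exact Finsupp.sum_congr fun p _ =>
    Finsupp.sum_add_index' (fun q => by simp) (fun q b₁ b₂ => by rw [map_add, mul_add, add_smul])

/- derivation identities -/
variable (g) in
lemma derG_ggPart (m₀ : ℤ) (m : Fin r → ℤ) (i : Fin r) (f f' : TorIdx r →₀ g) :
    derG r g m₀ m i (ggPart r g f f')
      = ggPart r g (derG r g m₀ m i f) f' + ggPart r g f (derG r g m₀ m i f') := by
  induction f using Finsupp.induction_linear with
  | zero => simp [ggPart_zero_left, derG_zero]
  | add f₁ f₂ h₁ h₂ =>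
      rw [ggPart_add_left, derG_add, h₁, h₂, derG_add, ggPart_add_left, ggPart_add_left]
      abel
  | single p a =>
    induction f' using Finsupp.induction_linear with
    | zero => simp [ggPart_zero_right, derG_zero]
    | add f₁ f₂ h₁ h₂ =>
        rw [ggPart_add_right, derG_add, h₁, h₂, derG_add, ggPart_add_right, ggPart_add_right]
        abel
    | single q b =>
        rw [ggPart_single_single, derG_single, derG_single, derG_single,
          ggPart_single_single, ggPart_single_single]
        rw [show m₀ + p.1 + q.1 = m₀ + (p.1 + q.1) from add_assoc _ _ _,
          show m + p.2 + q.2 = m + (p.2 + q.2) from add_assoc _ _ _,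
          show p.1 + (m₀ + q.1) = m₀ + (p.1 + q.1) from add_left_comm _ _ _,
          show p.2 + (m + q.2) = m + (p.2 + q.2) from add_left_comm _ _ _,
          ← Finsupp.single_add]
        congr 1
        rw [smul_lie, lie_smul, ← add_smul]
        congr 1
        show (((p.2 + q.2) i : ℤ) : ℂ) = ((p.2 i : ℤ) : ℂ) + ((q.2 i : ℤ) : ℂ)
        rw [Pi.add_apply]
        push_cast
        ring

variable (g) in
lemma derK_centPart (k : ℂ) (B : g →ₗ[ℂ] g →ₗ[ℂ] ℂ) (m₀ : ℤ) (m : Fin r → ℤ) (i : Fin r)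
    (f f' : TorIdx r →₀ g) :
    derK r m₀ m i (centPart r g k B f f')
      = centPart r g k B (derG r g m₀ m i f) f' + centPart r g k B f (derG r g m₀ m i f') := by
  induction f using Finsupp.induction_linear with
  | zero => simp [centPart_zero_left, derG_zero, derK_zero]
  | add f₁ f₂ h₁ h₂ =>
      rw [centPart_add_left, derK_add, h₁, h₂, derG_add, centPart_add_left, centPart_add_left]
      abel
  | single p a =>
    induction f' using Finsupp.induction_linear with
    | zero => simp [centPart_zero_right, derG_zero, derK_zero]
    | add f₁ f₂ h₁ h₂ =>
        rw [centPart_add_right, derK_add, h₁, h₂, derG_add, centPart_add_right, centPart_add_right]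
        abel
    | single q b =>
        rw [centPart_single_single, derK_smul, derK_consSum, derG_single, derG_single,
          centPart_single_single, centPart_single_single]
        rw [show m₀ + p.1 + q.1 = m₀ + (p.1 + q.1) from add_assoc _ _ _,
          show m + p.2 + q.2 = m + (p.2 + q.2) from add_assoc _ _ _,
          show p.1 + (m₀ + q.1) = m₀ + (p.1 + q.1) from add_left_comm _ _ _,
          show p.2 + (m + q.2) = m + (p.2 + q.2) from add_left_comm _ _ _]
        rw [consSum_add, map_smul, map_smul, LinearMap.smul_apply, smul_eq_mul, smul_eq_mul]
        rw [show (((p.2 + q.2) i : ℤ) : ℂ) = ((p.2 i : ℤ) : ℂ) + ((q.2 i : ℤ) : ℂ) from by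
          rw [Pi.add_apply]; push_cast; ring]
        module

end Aux

/-- for each `1 ≤ i ≤ r`, `m₀ ∈ ℤ`, `m ∈ ℤ^r`, the endomorphism
`D` of `L̂'_{r+1,k}(g)` given by `D(a ⊗ t₀^{n₀}t^n) = n_i a ⊗ t₀^{m₀+n₀}t^{m+n}`
and `D(K_j ⊗ t₀^{n₀}t^n) = n_i K_j ⊗ t₀^{m₀+n₀}t^{m+n}
+ δ_{i,j} Σ_l m_l K_l ⊗ t₀^{m₀+n₀}t^{m+n}` is well defined on the quotient `K`
(it maps the relation subspace into itself, hence descends to the quotient),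
and it is a derivation of the toroidal Lie algebra of level `k`. -/
theorem toroidal_derivation
    (r : ℕ) (hr : 1 ≤ r)
    (g : Type*) [LieRing g] [LieAlgebra ℂ g]
    (k : ℂ) (B : g →ₗ[ℂ] g →ₗ[ℂ] ℂ)
    (hsymm : ∀ a b : g, B a b = B b a)
    (hinv : ∀ a b c : g, B ⁅a, b⁆ c = B a ⁅b, c⁆)
    (m₀ : ℤ) (m : Fin r → ℤ) (i : Fin r) :
    (∀ u ∈ RR r, derK r m₀ m i u ∈ RR r) ∧
    ∃ D : (TorIdx r →₀ g) × (CF r ⧸ RR r) → (TorIdx r →₀ g) × (CF r ⧸ RR r),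
      (∀ (f : TorIdx r →₀ g) (u : CF r),
        D (f, (RR r).mkQ u) = (derG r g m₀ m i f, (RR r).mkQ (derK r m₀ m i u))) ∧
      (∀ x y, D (torBracket r g k B x y)
        = torBracket r g k B (D x) y + torBracket r g k B x (D y)) := by
  refine ⟨derK_mem_RR m₀ m i, ?_⟩
  have hle : RR r ≤ (RR r).comap (derKL r m₀ m i) := fun u hu => derK_mem_RR m₀ m i u hu
  refine ⟨fun x => (derG r g m₀ m i x.1,
      Submodule.mapQ (RR r) (RR r) (derKL r m₀ m i) hle x.2), fun f u => ?_, fun x y => ?_⟩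
  · simp only [Submodule.mkQ_apply, Submodule.mapQ_apply, derKL_apply]
  · show (derG r g m₀ m i (ggPart r g x.1 y.1),
        Submodule.mapQ (RR r) (RR r) (derKL r m₀ m i) hle
          ((RR r).mkQ (centPart r g k B x.1 y.1))) = _
    rw [Submodule.mkQ_apply, Submodule.mapQ_apply, derKL_apply]
    show _ = (ggPart r g (derG r g m₀ m i x.1) y.1, (RR r).mkQ (centPart r g k B (derG r g m₀ m i x.1) y.1))
      + (ggPart r g x.1 (derG r g m₀ m i y.1), (RR r).mkQ (centPart r g k B x.1 (derG r g m₀ m i y.1)))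
    rw [Prod.mk_add_mk, ← map_add]
    refine Prod.ext (derG_ggPart g m₀ m i x.1 y.1) ?_
    exact congrArg ((RR r).mkQ) (derK_centPart g k B m₀ m i x.1 y.1)
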